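/- Let p be a prime, let (a_n)_{n≥1} be a sequence of integers, and let f(t) = ∑_{n≥1} a_n t^{n-1} ∈ ℤ[[t]]. Then the (p−1)-st formal derivative of f satisfies f^{(p-1)}(t) ≡ −∑_{n≥1} a_{np} t^{(n-1)p} (mod p), i.e., the reductions mod p of the two power series coincide coefficientwise. -/

import Mathlib

open PowerSeries

lemma coeff_iterate_derivative (f : PowerSeries ℤ) (m k : ℕ) :
    PowerSeries.coeff (R := ℤ) k ((fun g => PowerSeries.derivative ℤ g)^[m] f) =
      (∏ i ∈ Finset.range m, ((k + 1 + i : ℕ) : ℤ)) * PowerSeries.coeff (R := ℤ) (k + m) f := by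
  induction m generalizing f with
  | zero => simp
  | succ m ih =>
    rw [Function.iterate_succ_apply, ih, PowerSeries.coeff_derivative,
      Finset.prod_range_succ]
    push_cast
    ring_nf

/-- Let `p` be prime, `(a_n)_{n ≥ 1}` integers and `f(t) = ∑_{n ≥ 1} a_n t^{n-1} ∈ ℤ[[t]]`.
Then `f^{(p-1)}(t) ≡ -∑_{n ≥ 1} a_{np} t^{(n-1)p} (mod p)` coefficientwise: the coefficient of
`t^k` of `f^{(p-1)}` is congruent mod `p` to `-a_{(k/p+1)p}` if `p ∣ k` and to `0` otherwise. -/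
theorem iterated_derivative_mod_p
    (p : ℕ) (hp : p.Prime) (a : ℕ → ℤ)
    (f : PowerSeries ℤ) (hf : f = PowerSeries.mk fun k => a (k + 1)) :
    ∀ k : ℕ,
      PowerSeries.coeff (R := ℤ) k ((fun g => PowerSeries.derivative ℤ g)^[p - 1] f) ≡
        (if p ∣ k then -a ((k / p + 1) * p) else 0) [ZMOD p] := by
  intro k
  have hp1 : 1 ≤ p := hp.one_lt.le
  have : Fact p.Prime := ⟨hp⟩
  rw [coeff_iterate_derivative, hf, PowerSeries.coeff_mk]
  rw [← ZMod.intCast_eq_intCast_iff, Int.cast_mul]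
  have hc : (((∏ i ∈ Finset.range (p - 1), ((k + 1 + i : ℕ) : ℤ)) : ℤ) : ZMod p) =
      ∏ i ∈ Finset.range (p - 1), ((k + 1 + i : ℕ) : ZMod p) := by
    push_cast
    rfl
  rw [hc]
  by_cases hk : p ∣ k
  · have hprod : (∏ i ∈ Finset.range (p - 1), ((k + 1 + i : ℕ) : ZMod p)) = -1 := by
      have h1 : ∀ i ∈ Finset.range (p - 1), ((k + 1 + i : ℕ) : ZMod p) = ((i + 1 : ℕ) : ZMod p) := by
        intro i _
        obtain ⟨c, rfl⟩ := hk
        push_cast [ZMod.natCast_self]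
        ring
      rw [Finset.prod_congr rfl h1, ← Nat.cast_prod, Finset.prod_range_add_one_eq_factorial]
      exact ZMod.wilsons_lemma p
    have hidx : k + (p - 1) + 1 = k + p := by omega
    have hidx2 : (k / p + 1) * p = k + p := by
      obtain ⟨c, rfl⟩ := hk
      rw [Nat.mul_div_cancel_left c hp.pos]
      ring
    rw [hprod, if_pos hk, hidx, hidx2]
    push_cast
    ring
  · have hr : 0 < k % p := Nat.pos_of_ne_zero fun h => hk (Nat.dvd_of_mod_eq_zero h)
    have hrp : k % p < p := Nat.mod_lt _ hp.pos
    have hi : p - k % p - 1 ∈ Finset.range (p - 1) := by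
      simp only [Finset.mem_range]
      omega
    have hz : ((k + 1 + (p - k % p - 1) : ℕ) : ZMod p) = 0 := by
      have hd : p ∣ k + 1 + (p - k % p - 1) := by
        have hdd : k % p + p * (k / p) = k := Nat.mod_add_div k p
        refine ⟨k / p + 1, ?_⟩
        have h2 : p * (k / p + 1) = p * (k / p) + p := by ring
        omega
      exact (ZMod.natCast_eq_zero_iff _ _).mpr hd
    rw [Finset.prod_eq_zero hi hz, zero_mul, if_neg hk, Int.cast_zero]
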